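/- Let X be a Grothendieck category with a localizing subcategory Y and quotient functor π : X → X/Y. Let Z be a weakly closed subcategory of X, let Z' be the full subcategory generated by the Y-torsionfree objects in Z, and let Ẑ = (π^{-1}(π(Z)))'. Then Ẑ = (Y * Z)', where Y * Z is the Gabriel product; that is, Ẑ equals the full subcategory generated by the Y-torsionfree objects of the Gabriel product Y * Z. -/
import Mathlib


open CategoryTheory CategoryTheory.Limits Opposite

universe v u

namespace Paper

variable {C : Type u} [Category.{v} C]

/-- An object `M` is compact if `Hom(M, -)` commutes with arbitrary (small) direct sums. -/
def IsCompactObj (M : C) : Prop :=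
  ∀ ι : Type v, Nonempty (PreservesColimitsOfShape (Discrete ι) (coyoneda.obj (op M)))

variable [Abelian C]

section
variable [HasColimits C]

/-- A full subcategory (given by its set of objects) is weakly closed if it is closed
under subobjects, quotient objects and arbitrary (small) direct sums. -/
structure IsWeaklyClosed (Z : Set C) : Prop where
  mem_of_mono : ∀ {A M : C} (f : A ⟶ M), Mono f → M ∈ Z → A ∈ Z
  mem_of_epi : ∀ {M B : C} (f : M ⟶ B), Epi f → M ∈ Z → B ∈ Z
  sigma_mem : ∀ {ι : Type v} (f : ι → C), (∀ i, f i ∈ Z) → (∐ f) ∈ Z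

/-- Closure under arbitrary (small) products. -/
def ClosedUnderProducts [HasLimits C] (Z : Set C) : Prop :=
  ∀ {ι : Type v} (f : ι → C), (∀ i, f i ∈ Z) → (∏ᶜ f) ∈ Z

/-- A closed subcategory: weakly closed and closed under products. -/
def IsClosedSub [HasLimits C] (Z : Set C) : Prop :=
  IsWeaklyClosed Z ∧ ClosedUnderProducts Z

/-- Closure under extensions. -/
def ClosedUnderExtensions (Y : Set C) : Prop :=
  ∀ S : ShortComplex C, S.ShortExact → S.X₁ ∈ Y → S.X₃ ∈ Y → S.X₂ ∈ Y

/-- A localizing subcategory: weakly closed and closed under extensions. -/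
def IsLocalizing (Y : Set C) : Prop :=
  IsWeaklyClosed Y ∧ ClosedUnderExtensions Y

/-- The full subcategory generated by a class of objects `G`: all quotient objects
of (small) direct sums of objects of `G`. -/
def generatedBy (G : Set C) : Set C :=
  { M | ∃ (ι : Type v) (f : ι → C), (∀ i, f i ∈ G) ∧ ∃ p : (∐ f) ⟶ M, Epi p }

end

/-- A filter of subobjects of an object: nonempty, upward closed, and closed under
finite intersections. -/
def IsFilterOn {O : C} (F : Set (Subobject O)) : Prop :=
  F.Nonempty ∧ (∀ {I J : Subobject O}, I ∈ F → I ≤ J → J ∈ F) ∧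
    ∀ {I J : Subobject O}, I ∈ F → J ∈ F → I ⊓ J ∈ F

/-- A principal filter consists of all subobjects containing a fixed one. -/
def IsPrincipalFilter {O : C} (F : Set (Subobject O)) : Prop :=
  ∃ I : Subobject O, F = { J | I ≤ J }

variable {A : Type v}

/-- A filter system in a family of objects. -/
def IsFilterSystem (O : A → C) (F : ∀ α, Set (Subobject (O α))) : Prop :=
  (∀ α, IsFilterOn (F α)) ∧
    ∀ (α β : A) (f : O α ⟶ O β), ∀ J ∈ F β, (Subobject.pullback f).obj J ∈ F α

/-- An ideal in a family of generators: a choice of subobject `I α ⊆ O α` for each `α`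
such that `f (I α) ⊆ I β` for every morphism `f : O α ⟶ O β`
(expressed as `I α ≤ f⁻¹ (I β)`). -/
def IsIdealIn (O : A → C) (I : ∀ α, Subobject (O α)) : Prop :=
  ∀ (α β : A) (f : O α ⟶ O β), I α ≤ (Subobject.pullback f).obj (I β)

/-- The quotient object `O/I` of `O` by a subobject `I`. -/
noncomputable def quotBy {O : C} (I : Subobject O) : C := cokernel I.arrow

/-- The weakly closed subcategory generated by the objects `O α / I`, `I ∈ F α`. -/
def wcOfFilterSystem [HasColimits C] (O : A → C) (F : ∀ α, Set (Subobject (O α))) : Set C :=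
  generatedBy { M | ∃ (α : A) (I : Subobject (O α)), I ∈ F α ∧ Nonempty (quotBy I ≅ M) }

/-- The filter system associated to a subcategory `Z`: `F α = {I | O α / I ∈ Z}`. -/
def filterOf (O : A → C) (Z : Set C) (α : A) : Set (Subobject (O α)) :=
  { I | quotBy I ∈ Z }

section QuotientCat

variable {D : Type u} [Category.{v} D]

/-- The image `π(Z)` of a subcategory, as a full subcategory of the target
(closed under isomorphism). -/
def imageSub (π : C ⥤ D) (Z : Set C) : Set D := { N | ∃ M ∈ Z, Nonempty (π.obj M ≅ N) }

/-- The preimage `π⁻¹(𝒵)` of a subcategory. -/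
def preimageSub (π : C ⥤ D) (Z : Set D) : Set C := { M | π.obj M ∈ Z }

/-- `M` is `Y`-torsionfree if it has no nonzero subobject belonging to `Y`. -/
def IsTorsionFree (Y : Set C) (M : C) : Prop :=
  ∀ (N : C) (f : N ⟶ M), Mono f → N ∈ Y → IsZero N

/-- `Z` is `Y`-essentially stable if `ωπ(M) ∈ Z` for all `M ∈ Z`. -/
def EssStable (π : C ⥤ D) (ω : D ⥤ C) (Z : Set C) : Prop :=
  ∀ M ∈ Z, ω.obj (π.obj M) ∈ Z

/-- `Z'`: the full subcategory generated by the `Y`-torsionfree objects of `Z`. -/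
def torsPart [HasColimits C] (Y Z : Set C) : Set C :=
  generatedBy { M | M ∈ Z ∧ IsTorsionFree Y M }

/-- `Z` is `Y`-torsionfree generated if every object of `Z` is a quotient of a direct sum
of `Y`-torsionfree objects of `Z`. -/
def TorsionfreeGenerated [HasColimits C] (Y Z : Set C) : Prop :=
  Z ⊆ torsPart Y Z

/-- `Z` is `Y`-weakly closed: weakly closed, `Y`-essentially stable
and `Y`-torsionfree generated. -/
def IsYWeaklyClosed [HasColimits C] (π : C ⥤ D) (ω : D ⥤ C) (Y Z : Set C) : Prop :=
  IsWeaklyClosed Z ∧ EssStable π ω Z ∧ TorsionfreeGenerated Y Z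

/-- `Z` is `Y`-closed: closed, `Y`-essentially stable and `Y`-torsionfree generated. -/
def IsYClosed [HasLimits C] [HasColimits C] (π : C ⥤ D) (ω : D ⥤ C) (Y Z : Set C) : Prop :=
  IsClosedSub Z ∧ EssStable π ω Z ∧ TorsionfreeGenerated Y Z

end QuotientCat

/-- The Gabriel product `Z * W`: all objects `P` fitting in a short exact sequence
`0 → M → P → N → 0` with `M ∈ W` and `N ∈ Z`. -/
def gabrielProd (Z W : Set C) : Set C :=
  { P | ∃ S : ShortComplex C, S.ShortExact ∧ S.X₁ ∈ W ∧ S.X₃ ∈ Z ∧ Nonempty (S.X₂ ≅ P) }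

/-- `Isat` is the `Y`-saturation of `I` inside `O`: the largest subobject `J ⊇ I`
with `J/I ∈ Y`; that is, `Isat/I = τ(O/I)`. -/
def IsSaturationOf (Y : Set C) {O : C} (I Isat : Subobject O) : Prop :=
  ∃ h : I ≤ Isat, cokernel (Subobject.ofLE I Isat h) ∈ Y ∧
    ∀ (J : Subobject O) (hJ : I ≤ J), cokernel (Subobject.ofLE I J hJ) ∈ Y → J ≤ Isat


/-- The subcategory generated by the objects `O α / I α` for an ideal `I`. -/
def wcOfIdeal [HasColimits C] (O : A → C) (I : ∀ α, Subobject (O α)) : Set C :=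
  generatedBy { M | ∃ α : A, Nonempty (quotBy (I α) ≅ M) }

/-- The union `Z₁ ∪ Z₂` of two weakly closed subcategories: explicitly, all
subquotients of objects `M ⊞ N` with `M ∈ Z₁` and `N ∈ Z₂`. -/
def unionWC (Z₁ Z₂ : Set C) : Set C :=
  { P | ∃ (M N Q : C) (i : Q ⟶ M ⊞ N) (p : Q ⟶ P), M ∈ Z₁ ∧ N ∈ Z₂ ∧ Mono i ∧ Epi p }

/-- For a weakly closed `Z`, the subcategory `Ẑ = (π⁻¹(π(Z)))'` equals
`(Y * Z)'`, the subcategory generated by the `Y`-torsionfree objects of the Gabriel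
product `Y * Z`. -/
theorem statement_12 {X : Type u} [Category.{v} X] [Abelian X]
    [HasColimits X] [HasFilteredColimits X] [AB5 X]
    (hgen : ∃ G : X, IsSeparator G)
    {D : Type u} [Category.{v} D] [Abelian D] [HasColimits D]
    (Y : Set X) (hYloc : IsLocalizing Y)
    (π : X ⥤ D) (ω : D ⥤ X) (adj : π ⊣ ω) [PreservesFiniteLimits π]
    [ω.Full] [ω.Faithful]
    (hker : ∀ M : X, M ∈ Y ↔ IsZero (π.obj M))
    (Z : Set X) (hZ : IsWeaklyClosed Z) :
    torsPart Y (preimageSub π (imageSub π Z)) = torsPart Y (gabrielProd Y Z) := by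
  have : π.IsLeftAdjoint := ⟨ω, ⟨adj⟩⟩
  have hπc : PreservesColimits π := adj.leftAdjoint_preservesColimits
  have hπfc : PreservesFiniteColimits π :=
    Limits.PreservesColimitsOfSize.preservesFiniteColimits π
  -- the key set equality
  have hsets : { M : X | M ∈ preimageSub π (imageSub π Z) ∧ IsTorsionFree Y M }
      = { M : X | M ∈ gabrielProd Y Z ∧ IsTorsionFree Y M } := by
    ext M
    simp only [Set.mem_setOf_eq]
    constructor
    · rintro ⟨⟨N, hN, ⟨e⟩⟩, htf⟩
      refine ⟨?_, htf⟩
      -- e : π.obj N ≅ π.obj M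
      set u : N ⟶ ω.obj (π.obj N) := adj.unit.app N with hu
      set m : M ⟶ ω.obj (π.obj N) := adj.unit.app M ≫ ω.map e.inv with hm
      have hiso_unit : ∀ P : X, IsIso (π.map (adj.unit.app P)) := by
        intro P
        have h1 : π.map (adj.unit.app P) ≫ adj.counit.app (π.obj P) = 𝟙 _ :=
          adj.left_triangle_components P
        have : IsIso (π.map (adj.unit.app P) ≫ adj.counit.app (π.obj P)) := by
          rw [h1]; infer_instance
        exact IsIso.of_isIso_comp_right _ (adj.counit.app (π.obj P))
      have hmono_m : Mono m := by
        have hiso : IsIso (π.map m) := by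
          rw [hm, π.map_comp]
          have := hiso_unit M
          infer_instance
        have hkerY : kernel m ∈ Y := by
          rw [hker]
          have hmono' : Mono (π.map m) := by infer_instance
          exact IsZero.of_iso (IsZero.of_iso (isZero_zero D) (kernel.ofMono (π.map m)))
            (PreservesKernel.iso π m)
        have hz : IsZero (kernel m) := htf _ (kernel.ι m) inferInstance hkerY
        exact Preadditive.mono_of_kernel_iso_zero hz.isoZero
      -- cokernel of the unit is torsion
      have hcokerY : cokernel u ∈ Y := by
        rw [hker]
        have : IsIso (π.map u) := hiso_unit N
        exact IsZero.of_iso (IsZero.of_iso (isZero_zero D) (cokernel.ofEpi (π.map u)))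
          (PreservesCokernel.iso π u)
      set q : M ⟶ cokernel u := m ≫ cokernel.π u with hq
      -- kernel q ∈ Z
      have hKZ : kernel q ∈ Z := by
        have hL : Abelian.image u ∈ Z := hZ.mem_of_epi (Abelian.factorThruImage u)
          inferInstance hN
        have hzero : (kernel.ι q ≫ m) ≫ cokernel.π u = 0 := by
          rw [Category.assoc, ← hq, kernel.condition]
        refine hZ.mem_of_mono (kernel.lift (cokernel.π u) (kernel.ι q ≫ m) hzero) ?_ hL
        have hfac : kernel.lift (cokernel.π u) (kernel.ι q ≫ m) hzero ≫
            kernel.ι (cokernel.π u) = kernel.ι q ≫ m := kernel.lift_ι _ _ _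
        have : Mono (kernel.lift (cokernel.π u) (kernel.ι q ≫ m) hzero ≫
            kernel.ι (cokernel.π u)) := by
          rw [hfac]; exact mono_comp _ _
        exact mono_of_mono _ (kernel.ι (cokernel.π u))
      -- cokernel (kernel.ι q) ∈ Y
      have hCY : cokernel (kernel.ι q) ∈ Y := by
        have h1 : Abelian.image q ∈ Y :=
          hYloc.1.mem_of_mono (kernel.ι (cokernel.π q)) inferInstance hcokerY
        exact hYloc.1.mem_of_mono (Abelian.coimageIsoImage q).hom inferInstance h1
      refine ⟨ShortComplex.mk (kernel.ι q) (cokernel.π (kernel.ι q)) (cokernel.condition _),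
        ?_, hKZ, hCY, ⟨Iso.refl M⟩⟩
      exact { exact := ShortComplex.exact_of_g_is_cokernel _ (cokernelIsCokernel _) }
    · rintro ⟨⟨S, hS, hX1, hX3, ⟨e⟩⟩, htf⟩
      refine ⟨⟨S.X₁, hX1, ?_⟩, htf⟩
      have hS' : (S.map π).ShortExact := hS.map_of_exact π
      have hz3 : IsZero (π.obj S.X₃) := (hker _).mp hX3
      have hg0 : π.map S.g = 0 := hz3.eq_of_tgt _ _
      have hepi : Epi (π.map S.f) := hS'.exact.epi_f hg0
      have hmono : Mono (π.map S.f) := hS'.mono_f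
      have : IsIso (π.map S.f) := isIso_of_mono_of_epi _
      exact ⟨asIso (π.map S.f) ≪≫ π.mapIso e⟩
  unfold torsPart
  rw [hsets]

end Paper
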